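/- Let E : M_{ab}(ℂ) → M_{ab}(ℂ) be a linear, Hermiticity-preserving map (E(Xᴴ) = E(X)ᴴ for all X), where M_{ab}(ℂ) denotes matrices on ℂ^a ⊗ ℂ^b, and let E† denote its adjoint with respect to the Hilbert–Schmidt inner product ⟨A, B⟩ = tr(AᴴB). Let P̄ ∈ M_{ab}(ℂ) be Hermitian with operator norm ‖P̄‖_∞ ≤ 1, suppose there is a Hermitian Q ∈ M_b(ℂ) with ‖E†(P̄) − 1_a ⊗ Q‖_∞ ≤ δ, and suppose there are density matrices ρ₀, ρ₁ ∈ M_a(ℂ) and a density matrix Φ ∈ M_b(ℂ) such that tr(P̄ · E((ρ₀ − ρ₁) ⊗ Φ)) ≥ 2 − ε for some real ε ≥ 0. Then δ ≥ (2 − ε)/2. -/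

import Mathlib

open Matrix ComplexOrder Kronecker

/-- The ℓ²→ℓ² operator norm of a square complex matrix. -/
noncomputable def opNorm {m : Type*} [Fintype m] [DecidableEq m]
    (A : Matrix m m ℂ) : ℝ :=
  ‖Matrix.toEuclideanCLM (𝕜 := ℂ) A‖

section Aux

open scoped Matrix.Norms.L2Operator MatrixOrder

lemma opNorm_eq_norm {m : Type*} [Fintype m] [DecidableEq m] (A : Matrix m m ℂ) :
    opNorm A = ‖A‖ := rfl

lemma aux_dotProduct_bound {n : Type*} [Fintype n] [DecidableEq n]
    (D : Matrix n n ℂ) (v : n → ℂ) :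
    ‖dotProduct (star v) (D *ᵥ v)‖ ≤ opNorm D * (∑ j, ‖v j‖ ^ 2) := by
  have h1 : dotProduct (star v) (D *ᵥ v)
      = inner ℂ ((WithLp.equiv 2 _).symm v : EuclideanSpace ℂ n)
          ((WithLp.equiv 2 _).symm (D *ᵥ v) : EuclideanSpace ℂ n) :=
    by rw [dotProduct_comm]; rfl
  have h2 : ‖((WithLp.equiv 2 _).symm (D *ᵥ v) : EuclideanSpace ℂ n)‖
      ≤ ‖D‖ * ‖((WithLp.equiv 2 _).symm v : EuclideanSpace ℂ n)‖ :=
    D.l2_opNorm_mulVec ((WithLp.equiv 2 _).symm v)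
  have h3 : ‖((WithLp.equiv 2 _).symm v : EuclideanSpace ℂ n)‖ ^ 2 = ∑ j, ‖v j‖ ^ 2 := by
    rw [EuclideanSpace.norm_eq]
    rw [Real.sq_sqrt (Finset.sum_nonneg fun _ _ => sq_nonneg _)]
    rfl
  calc ‖dotProduct (star v) (D *ᵥ v)‖
      = ‖inner ℂ ((WithLp.equiv 2 _).symm v : EuclideanSpace ℂ n)
          ((WithLp.equiv 2 _).symm (D *ᵥ v) : EuclideanSpace ℂ n)‖ := by
        rw [h1]
    _ ≤ ‖((WithLp.equiv 2 _).symm v : EuclideanSpace ℂ n)‖ *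
          ‖((WithLp.equiv 2 _).symm (D *ᵥ v) : EuclideanSpace ℂ n)‖ := norm_inner_le_norm _ _
    _ ≤ ‖((WithLp.equiv 2 _).symm v : EuclideanSpace ℂ n)‖ *
          (‖D‖ * ‖((WithLp.equiv 2 _).symm v : EuclideanSpace ℂ n)‖) := by
        exact mul_le_mul_of_nonneg_left h2 (norm_nonneg _)
    _ = ‖D‖ * ‖((WithLp.equiv 2 _).symm v : EuclideanSpace ℂ n)‖ ^ 2 := by ring
    _ = opNorm D * ∑ j, ‖v j‖ ^ 2 := by rw [h3, opNorm_eq_norm]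

lemma aux_abs_trace_le {n : Type*} [Fintype n] [DecidableEq n]
    (D σ : Matrix n n ℂ) (hσ : σ.PosSemidef) (hσtr : σ.trace = 1) :
    ‖(Dᴴ * σ).trace‖ ≤ opNorm D := by
  set s := CFC.sqrt σ with hs_def
  have hss : s * s = σ := CFC.sqrt_mul_sqrt_self σ (Matrix.nonneg_iff_posSemidef.mpr hσ)
  have hsH : sᴴ = s := (Matrix.nonneg_iff_posSemidef.mp (CFC.sqrt_nonneg σ)).1
  have hconj : ∀ i j, star (s j i) = s i j := by
    intro i j
    conv_rhs => rw [← hsH]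
    rfl
  have htr : (Dᴴ * σ).trace
      = ∑ i, dotProduct (star (fun j => s j i)) (Dᴴ *ᵥ (fun j => s j i)) := by
    rw [← hss, ← Matrix.mul_assoc, Matrix.trace_mul_comm]
    unfold Matrix.trace
    refine Finset.sum_congr rfl fun i _ => ?_
    simp only [Matrix.diag_apply, Matrix.mul_apply, dotProduct, Matrix.mulVec,
      Pi.star_apply, Finset.mul_sum, Finset.sum_mul]
    refine Finset.sum_congr rfl fun j _ => Finset.sum_congr rfl fun k _ => ?_
    rw [hconj i j]
  have hsum : ∑ i, ∑ j, ‖s j i‖ ^ 2 = 1 := by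
    have h1 : σ.trace = ∑ i, ∑ j, ((‖s j i‖ ^ 2 : ℝ) : ℂ) := by
      rw [← hss]
      unfold Matrix.trace
      refine Finset.sum_congr rfl fun i _ => ?_
      simp only [Matrix.diag_apply, Matrix.mul_apply]
      refine Finset.sum_congr rfl fun j _ => ?_
      rw [← hconj i j, Complex.star_def, ← Complex.normSq_eq_conj_mul_self,
        Complex.normSq_eq_norm_sq]
    rw [hσtr] at h1
    exact_mod_cast h1.symm
  calc ‖(Dᴴ * σ).trace‖
      ≤ ∑ i, ‖dotProduct (star (fun j => s j i)) (Dᴴ *ᵥ (fun j => s j i))‖ := by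
        rw [htr]; exact norm_sum_le _ _
    _ ≤ ∑ i, opNorm Dᴴ * (∑ j, ‖s j i‖ ^ 2) :=
        Finset.sum_le_sum fun i _ => aux_dotProduct_bound Dᴴ _
    _ = opNorm Dᴴ * ∑ i, ∑ j, ‖s j i‖ ^ 2 := by rw [← Finset.mul_sum]
    _ = opNorm Dᴴ := by rw [hsum, mul_one]
    _ = opNorm D := by rw [opNorm_eq_norm, opNorm_eq_norm]; exact D.l2_opNorm_conjTranspose

end Aux

lemma aux_kron_conjTranspose {l m n p : Type*} (A : Matrix l m ℂ) (B : Matrix n p ℂ) :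
    (A ⊗ₖ B)ᴴ = Aᴴ ⊗ₖ Bᴴ := by
  ext ⟨i, j⟩ ⟨k, l⟩
  simp [Matrix.conjTranspose_apply, Matrix.kroneckerMap_apply, mul_comm]

lemma aux_sub_kron {l m n p : Type*} (A B : Matrix l m ℂ) (C : Matrix n p ℂ) :
    (A - B) ⊗ₖ C = A ⊗ₖ C - B ⊗ₖ C := by
  ext ⟨i, j⟩ ⟨k, l⟩
  simp [Matrix.kroneckerMap_apply, sub_mul]

lemma aux_kron_psd {m n : Type*} [Fintype m] [Fintype n] [DecidableEq m] [DecidableEq n]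
    {ρ : Matrix m m ℂ} {Φ : Matrix n n ℂ} (hρ : ρ.PosSemidef) (hΦ : Φ.PosSemidef) :
    (ρ ⊗ₖ Φ).PosSemidef := by
  exact hρ.kronecker hΦ

/-- Abstract core of the encoding-time lower bound: if a Hermiticity-preserving
linear map `E` (with Hilbert–Schmidt adjoint `Edag`) sends `(ρ₀ - ρ₁) ⊗ Φ` to
something distinguished with bias `≥ 2 - ε` by an observable `P̄` of norm at most
one, then `Edag P̄` cannot be `δ`-approximated in operator norm by `1 ⊗ Q`
unless `δ ≥ (2 - ε)/2`. -/
theorem heisenberg_observable_not_localizable {a b : ℕ}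
    (E Edag : Matrix (Fin a × Fin b) (Fin a × Fin b) ℂ →ₗ[ℂ]
      Matrix (Fin a × Fin b) (Fin a × Fin b) ℂ)
    (hHerm : ∀ X : Matrix (Fin a × Fin b) (Fin a × Fin b) ℂ, E Xᴴ = (E X)ᴴ)
    (hadj : ∀ A B : Matrix (Fin a × Fin b) (Fin a × Fin b) ℂ,
      (Aᴴ * E B).trace = ((Edag A)ᴴ * B).trace)
    (Pbar : Matrix (Fin a × Fin b) (Fin a × Fin b) ℂ)
    (hPbar : Pbar.IsHermitian) (hPnorm : opNorm Pbar ≤ 1)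
    (Q : Matrix (Fin b) (Fin b) ℂ) (hQ : Q.IsHermitian)
    (δ : ℝ)
    (hclose : opNorm (Edag Pbar - (1 : Matrix (Fin a) (Fin a) ℂ) ⊗ₖ Q) ≤ δ)
    (ρ₀ ρ₁ : Matrix (Fin a) (Fin a) ℂ)
    (hρ₀ : ρ₀.PosSemidef) (hρ₀tr : ρ₀.trace = 1)
    (hρ₁ : ρ₁.PosSemidef) (hρ₁tr : ρ₁.trace = 1)
    (Φ : Matrix (Fin b) (Fin b) ℂ) (hΦ : Φ.PosSemidef) (hΦtr : Φ.trace = 1)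
    (ε : ℝ) (hε : 0 ≤ ε)
    (hdist : 2 - ε ≤ ((Pbar * E ((ρ₀ - ρ₁) ⊗ₖ Φ)).trace).re) :
    δ ≥ (2 - ε) / 2 := by
  set D : Matrix (Fin a × Fin b) (Fin a × Fin b) ℂ :=
    Edag Pbar - (1 : Matrix (Fin a) (Fin a) ℂ) ⊗ₖ Q with hD_def
  -- rewrite trace via adjoint
  have hkey : (Pbar * E ((ρ₀ - ρ₁) ⊗ₖ Φ)).trace
      = ((Edag Pbar)ᴴ * ((ρ₀ - ρ₁) ⊗ₖ Φ)).trace := by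
    rw [← hadj, hPbar.eq]
  -- the identity part contributes equally to both states
  have hid : ∀ ρ : Matrix (Fin a) (Fin a) ℂ, ρ.trace = 1 →
      ((((1 : Matrix (Fin a) (Fin a) ℂ) ⊗ₖ Q)ᴴ) * (ρ ⊗ₖ Φ)).trace = (Qᴴ * Φ).trace := by
    intro ρ hρtr
    rw [aux_kron_conjTranspose, Matrix.conjTranspose_one, ← Matrix.mul_kronecker_mul,
      Matrix.one_mul, Matrix.trace_kronecker, hρtr, one_mul]
  have hXsplit : (Edag Pbar)ᴴ = Dᴴ + ((1 : Matrix (Fin a) (Fin a) ℂ) ⊗ₖ Q)ᴴ := by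
    rw [hD_def, Matrix.conjTranspose_sub, sub_add_cancel]
  have hσ₀ : (ρ₀ ⊗ₖ Φ).PosSemidef := aux_kron_psd hρ₀ hΦ
  have hσ₁ : (ρ₁ ⊗ₖ Φ).PosSemidef := aux_kron_psd hρ₁ hΦ
  have hσ₀tr : (ρ₀ ⊗ₖ Φ).trace = 1 := by rw [Matrix.trace_kronecker, hρ₀tr, hΦtr, one_mul]
  have hσ₁tr : (ρ₁ ⊗ₖ Φ).trace = 1 := by rw [Matrix.trace_kronecker, hρ₁tr, hΦtr, one_mul]
  have hb₀ := aux_abs_trace_le D (ρ₀ ⊗ₖ Φ) hσ₀ hσ₀tr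
  have hb₁ := aux_abs_trace_le D (ρ₁ ⊗ₖ Φ) hσ₁ hσ₁tr
  have hsplit : (Pbar * E ((ρ₀ - ρ₁) ⊗ₖ Φ)).trace
      = (Dᴴ * (ρ₀ ⊗ₖ Φ)).trace - (Dᴴ * (ρ₁ ⊗ₖ Φ)).trace := by
    rw [hkey, hXsplit, aux_sub_kron, mul_sub, Matrix.trace_sub, add_mul, add_mul,
      Matrix.trace_add, Matrix.trace_add, hid ρ₀ hρ₀tr, hid ρ₁ hρ₁tr]
    ring
  have hre : ((Pbar * E ((ρ₀ - ρ₁) ⊗ₖ Φ)).trace).re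
      = ((Dᴴ * (ρ₀ ⊗ₖ Φ)).trace).re - ((Dᴴ * (ρ₁ ⊗ₖ Φ)).trace).re := by
    rw [hsplit, Complex.sub_re]
  have h₀ : ((Dᴴ * (ρ₀ ⊗ₖ Φ)).trace).re ≤ δ :=
    (Complex.re_le_norm _).trans (hb₀.trans hclose)
  have h₁ : -δ ≤ ((Dᴴ * (ρ₁ ⊗ₖ Φ)).trace).re := by
    have := (Complex.abs_re_le_norm ((Dᴴ * (ρ₁ ⊗ₖ Φ)).trace)).trans (hb₁.trans hclose)
    linarith [abs_le.mp this |>.1]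
  rw [hre] at hdist
  linarith
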